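/- For every $d$ in the interior of $\overline{D}$ (i.e., $d>0$ and $\sum_{ij\in C}d_{ij}<1$ for all $C\in\mathcal{C}_1$), there exists $d'$ in the interior of $\overline{D}$ such that $P_{\mathrm{MTZ}}(d')\subsetneq P_{\mathrm{MTZ}}(d)$. -/

import Mathlib

/-- Weight of a directed cycle given by nodes `v 0, …, v (k-1)` with arcs
`(v i, v ((i+1) % k))`. -/
def cycleSum {α : Type} (c : α → α → ℝ) (k : ℕ) (v : ℕ → α) : ℝ :=
  ∑ i ∈ Finset.range k, c (v i) (v ((i + 1) % k))

/-- A directed cycle: at least two distinct nodes `v 0, …, v (k-1)`. -/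
def IsCycle {α : Type} (k : ℕ) (v : ℕ → α) : Prop :=
  2 ≤ k ∧ ∀ i < k, ∀ j < k, v i = v j → i = j

/-- A directed cycle avoiding node `0` (the paper's node 1), i.e. a member of `𝒞₁`. -/
def IsCycle1 {n : ℕ} (k : ℕ) (v : ℕ → Fin (n + 1)) : Prop :=
  IsCycle k v ∧ ∀ i < k, v i ≠ 0

/-- The (restricted) assignment polytope `P_AP`. -/
def memPAP {n : ℕ} (x : Fin (n + 1) → Fin (n + 1) → ℝ) : Prop :=
  (∀ i j : Fin (n + 1), i ≠ j → 0 ≤ x i j ∧ x i j ≤ 1) ∧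
  (∀ i : Fin (n + 1), ∑ j ∈ Finset.univ.erase i, x i j = 1) ∧
  (∀ i : Fin (n + 1), ∑ j ∈ Finset.univ.erase i, x j i = 1)

/-- Membership in `P_MTZ(d)`: the projection of the `d`-MTZ relaxation. -/
def memPMTZ {n : ℕ} (d x : Fin (n + 1) → Fin (n + 1) → ℝ) : Prop :=
  memPAP x ∧ ∀ (k : ℕ) (v : ℕ → Fin (n + 1)), IsCycle1 k v →
    cycleSum x k v ≤ (k : ℝ) - cycleSum d k v

/-- Sums over cycles only depend on the first `k` values of `v`. -/
lemma cycleSum_congr {α : Type} (c : α → α → ℝ) (k : ℕ) (v w : ℕ → α)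
    (h : ∀ i < k, v i = w i) : cycleSum c k v = cycleSum c k w := by
  refine Finset.sum_congr rfl fun i hi => ?_
  have hik := Finset.mem_range.mp hi
  rw [h i hik, h ((i + 1) % k) (Nat.mod_lt _ (by omega))]

/-- A cycle avoiding `0` has at most `n` nodes. -/
lemma cycle_k_le {n k : ℕ} {v : ℕ → Fin (n + 1)} (h : IsCycle1 k v) : k ≤ n := by
  obtain ⟨⟨hk2, hinj⟩, h0⟩ := h
  have := Finset.card_le_card_of_injOn v
    (s := Finset.range k) (t := Finset.univ.erase 0)
    (fun i hi => Finset.mem_erase.mpr ⟨h0 i (Finset.mem_range.mp hi), Finset.mem_univ _⟩)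
    (fun i hi j hj hij =>
      hinj i (Finset.mem_range.mp hi) j (Finset.mem_range.mp hj) hij)
  rw [Finset.card_range, Finset.card_erase_of_mem (Finset.mem_univ _), Finset.card_univ,
    Fintype.card_fin] at this
  omega

open Fin.NatCast in
/-- No cycle avoiding `0` can consist entirely of arcs of the cyclic successor tour. -/
lemma no_all_succ {n k : ℕ} (hk : 2 ≤ k) (hkn : k ≤ n) (v : ℕ → Fin (n + 1))
    (h : ∀ i < k, v ((i + 1) % k) = v i + 1) : False := by
  have claim : ∀ j, v (j % k) = v 0 + (j : Fin (n + 1)) := by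
    intro j
    induction j with
    | zero => simp
    | succ j ih =>
      have h1 : (j + 1) % k = (j % k + 1) % k := by
        conv_lhs => rw [Nat.add_mod]
        rw [Nat.mod_eq_of_lt (show 1 < k by omega)]
      rw [h1, h (j % k) (Nat.mod_lt _ (by omega)), ih]
      push_cast
      exact add_assoc _ _ _
  have hk0 := claim k
  rw [Nat.mod_self] at hk0
  have hc : (k : Fin (n + 1)) = 0 := by
    have := hk0.symm
    rwa [add_eq_left] at this
  have hdvd : (n + 1) ∣ k := Fin.natCast_eq_zero.mp hc
  have := Nat.le_of_dvd (by omega) hdvd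
  omega

lemma sum_ind_le {k i0 : ℕ} (hi0 : i0 < k) (P : ℕ → Prop) [DecidablePred P]
    (h : ¬ P i0) : ∑ i ∈ Finset.range k, (if P i then (1:ℝ) else 0) ≤ (k:ℝ) - 1 := by
  calc ∑ i ∈ Finset.range k, (if P i then (1:ℝ) else 0)
      ≤ ∑ i ∈ Finset.range k, (if i = i0 then (0:ℝ) else 1) := by
        refine Finset.sum_le_sum fun i _ => ?_
        split_ifs with h1 h2
        · exact absurd (h2 ▸ h1) h
        · exact le_refl 1
        · exact le_refl 0
        · norm_num
    _ = (k:ℝ) - 1 := by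
        have he : ∀ i, (if i = i0 then (0:ℝ) else 1) = 1 - (if i = i0 then 1 else 0) := by
          intro i; split_ifs <;> ring
        simp_rw [he]
        rw [Finset.sum_sub_distrib, Finset.sum_const, Finset.card_range,
          Finset.sum_ite_eq' (Finset.range k) i0 (fun _ => (1:ℝ)),
          if_pos (Finset.mem_range.mpr hi0)]
        simp [nsmul_eq_mul]

lemma exists_bound {n : ℕ} (d : Fin (n + 1) → Fin (n + 1) → ℝ)
    (hd2 : ∀ (k : ℕ) (v : ℕ → Fin (n + 1)), IsCycle1 k v → cycleSum d k v < 1) :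
    ∃ M : ℝ, 0 ≤ M ∧ M < 1 ∧
      ∀ (k : ℕ) (v : ℕ → Fin (n + 1)), IsCycle1 k v → cycleSum d k v ≤ M := by
  classical
  have hvlt : ∀ i : ℕ, i % (n + 1) < n + 1 := fun i => Nat.mod_lt _ (by omega)
  let vext : (Fin (n + 1) → Fin (n + 1)) → ℕ → Fin (n + 1) :=
    fun w i => w ⟨i % (n + 1), hvlt i⟩
  let S : Finset ℝ := insert 0 (((Finset.range (n + 2)) ×ˢ
      (Finset.univ : Finset (Fin (n + 1) → Fin (n + 1)))).image
      (fun p => if IsCycle1 p.1 (vext p.2) then cycleSum d p.1 (vext p.2) else 0))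
  have hSne : S.Nonempty := ⟨0, Finset.mem_insert_self _ _⟩
  refine ⟨S.max' hSne, Finset.le_max' _ _ (Finset.mem_insert_self _ _), ?_, ?_⟩
  · rw [Finset.max'_lt_iff]
    intro y hy
    rcases Finset.mem_insert.mp hy with h | h
    · rw [h]; norm_num
    · obtain ⟨p, _, rfl⟩ := Finset.mem_image.mp h
      split_ifs with hcyc
      · exact hd2 _ _ hcyc
      · norm_num
  · intro k v hc
    have hkn : k ≤ n := cycle_k_le hc
    let w : Fin (n + 1) → Fin (n + 1) := fun j => v j.val
    have hag : ∀ i < k, vext w i = v i := by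
      intro i hi
      show v (i % (n+1)) = v i
      congr 1
      exact Nat.mod_eq_of_lt (by omega)
    have hag' : ∀ i < k, v i = vext w i := fun i hi => (hag i hi).symm
    have hcyc' : IsCycle1 k (vext w) := by
      obtain ⟨⟨hk2, hinj⟩, h0⟩ := hc
      refine ⟨⟨hk2, fun i hi j hj hij => hinj i hi j hj ?_⟩, fun i hi => ?_⟩
      · rwa [hag i hi, hag j hj] at hij
      · rw [hag i hi]; exact h0 i hi
    have heq : cycleSum d k v = cycleSum d k (vext w) := cycleSum_congr _ _ _ _ hag'
    refine heq ▸ Finset.le_max' _ _ ?_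
    refine Finset.mem_insert_of_mem (Finset.mem_image.mpr ⟨(k, w), ?_, ?_⟩)
    · rw [Finset.mem_product]
      exact ⟨Finset.mem_range.mpr (by omega), Finset.mem_univ _⟩
    · simp only [if_pos hcyc']

set_option maxHeartbeats 1600000 in
/-- For every `d` in the interior of `D̄`, there is `d'` in the interior of `D̄`
with `P_MTZ(d') ⊊ P_MTZ(d)`. -/
theorem stmt_9 (n : ℕ) (hn : 4 ≤ n + 1) (d : Fin (n + 1) → Fin (n + 1) → ℝ)
    (hd1 : ∀ i j : Fin (n + 1), i ≠ 0 → j ≠ 0 → i ≠ j → 0 < d i j)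
    (hd2 : ∀ (k : ℕ) (v : ℕ → Fin (n + 1)), IsCycle1 k v → cycleSum d k v < 1) :
    ∃ d' : Fin (n + 1) → Fin (n + 1) → ℝ,
      (∀ i j : Fin (n + 1), i ≠ 0 → j ≠ 0 → i ≠ j → 0 < d' i j) ∧
      (∀ (k : ℕ) (v : ℕ → Fin (n + 1)), IsCycle1 k v → cycleSum d' k v < 1) ∧
      (∀ x : Fin (n + 1) → Fin (n + 1) → ℝ, memPMTZ d' x → memPMTZ d x) ∧
      ∃ x : Fin (n + 1) → Fin (n + 1) → ℝ, memPMTZ d x ∧ ¬ memPMTZ d' x := by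
  classical
  have hn3 : 3 ≤ n := by omega
  -- distinguished nonzero nodes
  set a : Fin (n + 1) := ⟨1, by omega⟩ with ha_def
  set b : Fin (n + 1) := ⟨2, by omega⟩ with hb_def
  have ha0 : a ≠ 0 := by simp [ha_def, Fin.ext_iff]
  have hb0 : b ≠ 0 := by simp [hb_def, Fin.ext_iff]
  have hab : a ≠ b := by simp [ha_def, hb_def, Fin.ext_iff]
  -- basic addition facts
  have hzadd : (0 : Fin (n + 1)) + 1 = a := by
    simp [ha_def, Fin.ext_iff, Fin.val_add, Nat.mod_eq_of_lt (show 1 < n + 1 by omega)]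
  have haadd : a + 1 = b := by
    simp [ha_def, hb_def, Fin.ext_iff, Fin.val_add,
      Nat.mod_eq_of_lt (show 1 < n + 1 by omega), Nat.mod_eq_of_lt (show 2 < n + 1 by omega)]
  have hbadd : b + 1 = ⟨3, by omega⟩ := by
    simp [hb_def, Fin.ext_iff, Fin.val_add,
      Nat.mod_eq_of_lt (show 1 < n + 1 by omega), Nat.mod_eq_of_lt (show 3 < n + 1 by omega)]
  -- the two permutations
  set K : Equiv.Perm (Fin (n + 1)) := (Equiv.swap 0 b).trans (Equiv.addRight 1) with hK_def
  set T : Equiv.Perm (Fin (n + 1)) := Equiv.addRight 1 with hT_def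
  have hTapp : ∀ i, T i = i + 1 := fun i => rfl
  have hKapp : ∀ i, K i = Equiv.swap 0 b i + 1 := fun i => rfl
  have hKa : K a = b := by
    rw [hKapp, Equiv.swap_apply_of_ne_of_ne ha0 hab, haadd]
  have hKb : K b = a := by
    rw [hKapp, Equiv.swap_apply_right, hzadd]
  have hKfix : ∀ i : Fin (n + 1), i ≠ 0 → i ≠ b → K i = i + 1 := by
    intro i h1 h2
    rw [hKapp, Equiv.swap_apply_of_ne_of_ne h1 h2]
  have hTne : ∀ i : Fin (n + 1), T i ≠ i := by
    intro i h
    rw [hTapp] at h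
    have : (1 : Fin (n + 1)) = 0 := by rwa [add_eq_left] at h
    simp [Fin.ext_iff] at this
    omega
  have hKne : ∀ i : Fin (n + 1), K i ≠ i := by
    intro i h
    by_cases h1 : i = 0
    · subst h1
      rw [hKapp, Equiv.swap_apply_left, hbadd] at h
      simp [Fin.ext_iff] at h
    · by_cases h2 : i = b
      · subst h2
        rw [hKb] at h
        exact hab h
      · rw [hKfix i h1 h2] at h
        have : (1 : Fin (n + 1)) = 0 := by rwa [add_eq_left] at h
        simp [Fin.ext_iff] at this
        omega
  -- δ and its bounds
  set δ : ℝ := d a b + d b a with hδ_def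
  -- the special two-cycle
  set vab : ℕ → Fin (n + 1) := fun j => if j = 0 then a else b with hvab_def
  have hsum2 : ∀ (c : Fin (n + 1) → Fin (n + 1) → ℝ) (w : ℕ → Fin (n + 1)),
      cycleSum c 2 w = c (w 0) (w 1) + c (w 1) (w 0) := by
    intro c w
    show ∑ i ∈ Finset.range 2, c (w i) (w ((i + 1) % 2)) = _
    rw [Finset.sum_range_succ, Finset.sum_range_succ, Finset.sum_range_zero]
    norm_num
  have hcyc_ab : IsCycle1 2 vab := by
    refine ⟨⟨le_refl 2, ?_⟩, ?_⟩
    · intro i hi j hj hij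
      have h01 : vab 0 = a := if_pos rfl
      have h11 : vab 1 = b := if_neg one_ne_zero
      interval_cases i <;> interval_cases j <;>
        first
          | rfl
          | (rw [h01, h11] at hij; exact absurd hij hab)
          | (rw [h01, h11] at hij; exact absurd hij.symm hab)
    · intro i hi
      rw [hvab_def]
      dsimp only
      split_ifs
      · exact ha0
      · exact hb0
  have hδpos : 0 < δ := add_pos (hd1 a b ha0 hb0 hab) (hd1 b a hb0 ha0 (Ne.symm hab))
  have hδlt : δ < 1 := by
    have := hd2 2 vab hcyc_ab
    rwa [hsum2, hvab_def] at this
  obtain ⟨M, hM0, hM1, hMb⟩ := exists_bound d hd2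
  -- the perturbation
  set ε : ℝ := (1 - M) / (2 * ((n : ℝ) + 1)) with hε_def
  have hεpos : 0 < ε := by
    apply div_pos (by linarith) (by positivity)
  set d' : Fin (n + 1) → Fin (n + 1) → ℝ := fun i j => d i j + ε with hd'_def
  have hd'sum : ∀ (k : ℕ) (v : ℕ → Fin (n + 1)),
      cycleSum d' k v = cycleSum d k v + k * ε := by
    intro k v
    show ∑ i ∈ Finset.range k, (d _ _ + ε) = _
    rw [Finset.sum_add_distrib, Finset.sum_const, Finset.card_range, nsmul_eq_mul]
    rfl
  refine ⟨d', ?_, ?_, ?_, ?_⟩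
  · intro i j hi hj hij
    have := hd1 i j hi hj hij
    simp only [hd'_def]
    linarith
  · intro k v hc
    have hkn : k ≤ n := cycle_k_le hc
    have h1 := hMb k v hc
    rw [hd'sum]
    have h2 : (k : ℝ) * ε ≤ ((n : ℝ) + 1) * ε := by
      apply mul_le_mul_of_nonneg_right _ (le_of_lt hεpos)
      exact_mod_cast by omega
    have h3 : ((n : ℝ) + 1) * ε = (1 - M) / 2 := by
      rw [hε_def]
      field_simp
    linarith
  · intro x hx
    refine ⟨hx.1, fun k v hc => ?_⟩
    have h1 := hx.2 k v hc
    have h2 : cycleSum d k v ≤ cycleSum d' k v := by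
      refine Finset.sum_le_sum fun i _ => ?_
      simp only [hd'_def]
      linarith
    linarith
  -- the witness point x
  set x : Fin (n + 1) → Fin (n + 1) → ℝ := fun i j =>
    (1 - δ) * (if j = K i then 1 else 0) + δ * (if j = T i then 1 else 0) with hx_def
  have hxab : x a b = 1 := by
    simp only [hx_def]
    rw [if_pos hKa.symm, if_pos (by rw [hTapp, haadd])]
    ring
  have hxba : x b a = 1 - δ := by
    simp only [hx_def]
    rw [if_pos hKb.symm, if_neg (by rw [hTapp, hbadd]; simp [ha_def, Fin.ext_iff])]
    ring
  have hxPAP : memPAP x := by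
    refine ⟨?_, ?_, ?_⟩
    · intro i j hij
      simp only [hx_def]
      constructor
      · split_ifs <;> nlinarith
      · split_ifs <;> nlinarith
    · intro i
      simp only [hx_def]
      rw [Finset.sum_add_distrib, ← Finset.mul_sum, ← Finset.mul_sum,
        Finset.sum_ite_eq' _ (K i) (fun _ => (1:ℝ)),
        Finset.sum_ite_eq' _ (T i) (fun _ => (1:ℝ)),
        if_pos (Finset.mem_erase.mpr ⟨hKne i, Finset.mem_univ _⟩),
        if_pos (Finset.mem_erase.mpr ⟨hTne i, Finset.mem_univ _⟩)]
      ring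
    · intro i
      have hrwK : ∀ j : Fin (n + 1), (i = K j) = (j = K.symm i) := by
        intro j
        apply propext
        constructor
        · intro h; rw [h, Equiv.symm_apply_apply]
        · intro h; rw [h, Equiv.apply_symm_apply]
      have hrwT : ∀ j : Fin (n + 1), (i = T j) = (j = T.symm i) := by
        intro j
        apply propext
        constructor
        · intro h; rw [h, Equiv.symm_apply_apply]
        · intro h; rw [h, Equiv.apply_symm_apply]
      have hKs : K.symm i ≠ i := fun h => hKne i ((Equiv.symm_apply_eq K).mp h).symm
      have hTs : T.symm i ≠ i := fun h => hTne i ((Equiv.symm_apply_eq T).mp h).symm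
      simp only [hx_def, hrwK, hrwT]
      rw [Finset.sum_add_distrib, ← Finset.mul_sum, ← Finset.mul_sum,
        Finset.sum_ite_eq' _ (K.symm i) (fun _ => (1:ℝ)),
        Finset.sum_ite_eq' _ (T.symm i) (fun _ => (1:ℝ)),
        if_pos (Finset.mem_erase.mpr ⟨hKs, Finset.mem_univ _⟩),
        if_pos (Finset.mem_erase.mpr ⟨hTs, Finset.mem_univ _⟩)]
      ring
  have hxMTZ : memPMTZ d x := by
    refine ⟨hxPAP, fun k v hc => ?_⟩
    have hk2 : 2 ≤ k := hc.1.1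
    have hkn : k ≤ n := cycle_k_le hc
    by_cases hsp : k = 2 ∧ ((v 0 = a ∧ v 1 = b) ∨ (v 0 = b ∧ v 1 = a))
    · obtain ⟨hk, hv⟩ := hsp
      subst hk
      rw [hsum2, hsum2]
      rcases hv with ⟨h0, h1⟩ | ⟨h0, h1⟩ <;> rw [h0, h1] <;>
        rw [hxab, hxba] <;> push_cast <;> simp only [hδ_def] <;> linarith
    · -- non-special cycle: each permutation misses at least one arc
      have hB : ∃ i, i < k ∧ v ((i + 1) % k) ≠ T (v i) := by
        by_contra hall
        push_neg at hall
        exact no_all_succ hk2 hkn v fun i hi => (hall i hi)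
      have hA : ∃ i, i < k ∧ v ((i + 1) % k) ≠ K (v i) := by
        by_contra hall
        push_neg at hall
        by_cases hbocc : ∃ p, p < k ∧ v p = b
        · obtain ⟨p, hp, hvp⟩ := hbocc
          have hq : (p + 1) % k < k := Nat.mod_lt _ (by omega)
          have hvq : v ((p + 1) % k) = a := by rw [hall p hp, hvp, hKb]
          have hvr : v (((p + 1) % k + 1) % k) = b := by
            rw [hall ((p + 1) % k) hq, hvq, hKa]
          have hrk : ((p + 1) % k + 1) % k < k := Nat.mod_lt _ (by omega)
          have hrp : ((p + 1) % k + 1) % k = p :=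
            hc.1.2 _ hrk p hp (hvr.trans hvp.symm)
          have hmod : ((p + 1) % k + 1) % k = (p + 2) % k :=
            (Nat.mod_modEq (p + 1) k).add_right 1
          have hpp : (p + 2) % k = p % k := by
            rw [← hmod, hrp, Nat.mod_eq_of_lt hp]
          have hdvd : k ∣ 2 := by
            have h' : p ≡ p + 2 [MOD k] := hpp.symm
            have := (Nat.modEq_iff_dvd' (by omega)).mp h'
            simpa using this
          have hk2' : k = 2 := by
            have := Nat.le_of_dvd (by omega) hdvd
            omega
          apply hsp
          refine ⟨hk2', ?_⟩
          subst hk2'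
          interval_cases p
          · right
            constructor
            · exact hvp
            · simpa using hvq
          · left
            constructor
            · simpa using hvq
            · exact hvp
        · push_neg at hbocc
          apply no_all_succ hk2 hkn v
          intro i hi
          rw [hall i hi, hKfix (v i) (hc.2 i hi) (hbocc i hi)]
      obtain ⟨iA, hiA, hA'⟩ := hA
      obtain ⟨iB, hiB, hB'⟩ := hB
      have hAle : ∑ i ∈ Finset.range k, (if v ((i + 1) % k) = K (v i) then (1:ℝ) else 0)
          ≤ (k : ℝ) - 1 := sum_ind_le hiA _ hA'
      have hBle : ∑ i ∈ Finset.range k, (if v ((i + 1) % k) = T (v i) then (1:ℝ) else 0)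
          ≤ (k : ℝ) - 1 := sum_ind_le hiB _ hB'
      have hAge : (0:ℝ) ≤ ∑ i ∈ Finset.range k,
          (if v ((i + 1) % k) = K (v i) then (1:ℝ) else 0) :=
        Finset.sum_nonneg fun i _ => by split_ifs <;> norm_num
      have hBge : (0:ℝ) ≤ ∑ i ∈ Finset.range k,
          (if v ((i + 1) % k) = T (v i) then (1:ℝ) else 0) :=
        Finset.sum_nonneg fun i _ => by split_ifs <;> norm_num
      have hxx : cycleSum x k v =
          (1 - δ) * (∑ i ∈ Finset.range k, (if v ((i + 1) % k) = K (v i) then (1:ℝ) else 0)) +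
          δ * (∑ i ∈ Finset.range k, (if v ((i + 1) % k) = T (v i) then (1:ℝ) else 0)) := by
        show ∑ i ∈ Finset.range k,
            ((1 - δ) * (if v ((i + 1) % k) = K (v i) then (1:ℝ) else 0) +
              δ * (if v ((i + 1) % k) = T (v i) then (1:ℝ) else 0)) = _
        rw [Finset.sum_add_distrib, ← Finset.mul_sum, ← Finset.mul_sum]
      have hdlt := hd2 k v hc
      rw [hxx]
      nlinarith [mul_le_mul_of_nonneg_left hAle (by linarith : (0:ℝ) ≤ 1 - δ),
        mul_le_mul_of_nonneg_left hBle (le_of_lt hδpos)]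
  refine ⟨x, hxMTZ, ?_⟩
  intro hmem
  have h1 := hmem.2 2 vab hcyc_ab
  have hv0 : vab 0 = a := if_pos rfl
  have hv1 : vab 1 = b := if_neg one_ne_zero
  rw [hsum2, hsum2, hv0, hv1, hxab, hxba] at h1
  have h2 : d' a b + d' b a = δ + 2 * ε := by
    simp only [hd'_def, hδ_def]; ring
  push_cast at h1
  rw [h2] at h1
  linarith
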